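/- Every eigenvalue of the Laplacian matrix of a finite directed graph is either zero or has positive real part. -/

import Mathlib

open Matrix

/-- Every (complex) eigenvalue of the Laplacian of a finite directed graph
    is either zero or has positive real part. -/
theorem laplacian_eigenvalues_nonneg_re (N : ℕ)
    (a : Matrix (Fin N) (Fin N) ℝ)
    (hdiag : ∀ i, a i i = 0) (h01 : ∀ i j, a i j = 0 ∨ a i j = 1) :
    let L : Matrix (Fin N) (Fin N) ℝ :=
      fun i j => if i = j then ∑ k, a i k else -a i j
    ∀ μ : ℂ, (∃ v : Fin N → ℂ, v ≠ 0 ∧ (L.map Complex.ofReal) *ᵥ v = μ • v) →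
      μ = 0 ∨ 0 < μ.re := by
  intro L μ ⟨v, hv, heq⟩
  have ha : ∀ i j, 0 ≤ a i j := fun i j => by rcases h01 i j with h | h <;> simp [h]
  obtain ⟨j0, hj0⟩ : ∃ j, v j ≠ 0 := Function.ne_iff.mp hv
  obtain ⟨i, -, hi⟩ := Finset.exists_max_image Finset.univ (fun j => ‖v j‖)
    ⟨j0, Finset.mem_univ _⟩
  have hvi : 0 < ‖v i‖ :=
    lt_of_lt_of_le (by simpa using hj0) (hi j0 (Finset.mem_univ _))
  set d : ℝ := ∑ k, a i k with hd
  have hd0 : 0 ≤ d := Finset.sum_nonneg fun k _ => ha i k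
  have hrow := congrFun heq i
  have hdc : (d : ℂ) = ∑ k, (a i k : ℂ) := by rw [hd]; push_cast; rfl
  have hrow' : (∑ j, (if i = j then (d : ℂ) else -(a i j : ℂ)) * v j) = μ * v i := by
    rw [hdc]
    simpa [Matrix.mulVec, Matrix.map, dotProduct, L, Pi.smul_apply, smul_eq_mul,
      apply_ite Complex.ofReal, Complex.ofReal_sum] using hrow
  have key : ((d : ℂ) - μ) * v i = ∑ j, (a i j : ℂ) * v j := by
    have hterm : ∀ j, (if i = j then (d : ℂ) else -(a i j : ℂ)) * v j
        = (if i = j then (d : ℂ) * v j else 0) - (a i j : ℂ) * v j := by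
      intro j
      by_cases h : i = j
      · subst h; simp [hdiag i]
      · simp [h]
    rw [Finset.sum_congr rfl (fun j _ => hterm j), Finset.sum_sub_distrib,
      Finset.sum_ite_eq] at hrow'
    simp at hrow'
    linear_combination hrow'
  have habs : ‖(d : ℂ) - μ‖ * ‖v i‖ ≤ d * ‖v i‖ := by
    rw [← norm_mul, key]
    calc ‖∑ j, (a i j : ℂ) * v j‖
        ≤ ∑ j, ‖(a i j : ℂ) * v j‖ := norm_sum_le _ _
      _ = ∑ j, a i j * ‖v j‖ := by
          refine Finset.sum_congr rfl fun j _ => ?_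
          rw [norm_mul, Complex.norm_real, Real.norm_eq_abs, abs_of_nonneg (ha i j)]
      _ ≤ ∑ j, a i j * ‖v i‖ := by
          refine Finset.sum_le_sum fun j _ => ?_
          exact mul_le_mul_of_nonneg_left (hi j (Finset.mem_univ _)) (ha i j)
      _ = d * ‖v i‖ := by rw [← Finset.sum_mul]
  have hle : ‖(d : ℂ) - μ‖ ≤ d := le_of_mul_le_mul_right habs hvi
  by_cases hμ : μ = 0
  · exact Or.inl hμ
  · right
    have h2 : (d - μ.re) ^ 2 + μ.im ^ 2 ≤ d ^ 2 := by
      have hsq : ‖(d : ℂ) - μ‖ ^ 2 ≤ d ^ 2 := by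
        nlinarith [norm_nonneg ((d : ℂ) - μ)]
      rw [Complex.sq_norm, Complex.normSq_apply] at hsq
      simpa [Complex.sub_re, Complex.sub_im, sq] using hsq
    have hpos : 0 < μ.re ^ 2 + μ.im ^ 2 := by
      have := Complex.normSq_pos.mpr hμ
      simpa [Complex.normSq_apply, sq] using this
    nlinarith
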